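/- Let K ⊆ K̃ be an extension of fields with compatible valuations (the valuation on K̃ restricts to the valuation on K), with valuation rings R ⊆ R̃ and residue fields k ⊆ k̃, and fix w ∈ ℝ^N lying in both value groups with compatible splittings. If I ⊆ K[x₁^±,…,x_N^±] is an ideal with initial ideal in_w(I) ⊆ k[x₁^±,…,x_N^±], then the initial ideal of the extended ideal I·K̃[x₁^±,…,x_N^±] equals in_w(I)·k̃[x₁^±,…,x_N^±]; i.e., initial ideals commute with base change of valued fields. -/

import Mathlib

noncomputable section

/-- A rank-one (additive, real-valued) valuation on a field. -/
structure AddVal (K : Type*) [Field K] where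
  v : K → WithTop ℝ
  v_eq_top_iff : ∀ a, v a = ⊤ ↔ a = 0
  v_one : v 1 = 0
  v_mul : ∀ a b, v (a * b) = v a + v b
  v_add : ∀ a b, min (v a) (v b) ≤ v (a + b)
  v_neg : ∀ a, v (-a) = v a

variable {K L : Type*} [Field K] [Field L]

/-- The valuation ring of an additive valuation. -/
def AddVal.R (val : AddVal K) : Subring K where
  carrier := {a | 0 ≤ val.v a}
  one_mem' := by show (0 : WithTop ℝ) ≤ val.v 1; rw [val.v_one]
  mul_mem' := fun ha hb => by
    show (0 : WithTop ℝ) ≤ val.v _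
    rw [val.v_mul]; exact add_nonneg ha hb
  zero_mem' := by
    show (0 : WithTop ℝ) ≤ val.v 0
    rw [(val.v_eq_top_iff 0).2 rfl]; exact le_top
  add_mem' := fun ha hb => le_trans (le_min ha hb) (val.v_add _ _)
  neg_mem' := fun ha => by
    show (0 : WithTop ℝ) ≤ val.v _
    rw [val.v_neg]; exact ha

/-- The maximal ideal of the valuation ring. -/
def AddVal.mIdeal (val : AddVal K) : Ideal val.R where
  carrier := {a | 0 < val.v a.1}
  zero_mem' := by
    show (0 : WithTop ℝ) < val.v 0
    rw [(val.v_eq_top_iff 0).2 rfl]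
    exact lt_top_iff_ne_top.mpr (by simp)
  add_mem' := fun ha hb => lt_of_lt_of_le (lt_min ha hb) (val.v_add _ _)
  smul_mem' := fun c a ha => by
    show (0 : WithTop ℝ) < val.v (c.1 * a.1)
    rw [val.v_mul]
    exact lt_of_lt_of_le ha (le_add_of_nonneg_left c.2)

/-- The residue field (as a ring) of an additive valuation. -/
def AddVal.k (val : AddVal K) := val.R ⧸ val.mIdeal

instance (val : AddVal K) : CommRing val.k := by unfold AddVal.k; infer_instance

/-- Reduction of an element of the valuation ring to the residue field
(and `0` on elements of negative valuation). -/
def AddVal.res (val : AddVal K) (a : K) : val.k :=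
  if h : 0 ≤ val.v a then Ideal.Quotient.mk val.mIdeal ⟨a, h⟩ else 0

/-- Weight of the monomial `x^u` under `w ∈ ℝ^N`. -/
def dotw {N : ℕ} (w : Fin N → ℝ) (u : Fin N → ℤ) : ℝ := ∑ i, w i * (u i : ℝ)

/-- The `w`-initial form of a Laurent polynomial lying in the tilted algebra:
keep the terms `a_u x^u` with `val(a_u) + w·u = 0`, reduced after multiplying by
the splitting element `r(w·u)`. -/
def initForm (val : AddVal K) (r : ℝ → K) {N : ℕ} (w : Fin N → ℝ)
    (f : AddMonoidAlgebra K (Fin N → ℤ)) : AddMonoidAlgebra val.k (Fin N → ℤ) :=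
  f.coeff.sum fun u a => AddMonoidAlgebra.single u
    (if val.v a + ((dotw w u : ℝ) : WithTop ℝ) = 0 then val.res (a * r (dotw w u)) else 0)

/-- The `w`-initial ideal: the ideal generated by the initial forms of the
elements of `I` lying in the tilted algebra `R[x^±]^w`. -/
def initIdeal (val : AddVal K) (r : ℝ → K) {N : ℕ} (w : Fin N → ℝ)
    (I : Ideal (AddMonoidAlgebra K (Fin N → ℤ))) : Ideal (AddMonoidAlgebra val.k (Fin N → ℤ)) :=
  Ideal.span {g | ∃ f ∈ I,
    (∀ u ∈ f.coeff.support, (0 : WithTop ℝ) ≤ val.v (f.coeff u) + ((dotw w u : ℝ) : WithTop ℝ)) ∧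
    initForm val r w f = g}

/-- The map of valuation rings induced by a valued field extension. -/
def AddVal.restrictHom (val : AddVal K) (valL : AddVal L) (ι : K →+* L)
    (h : ∀ a, valL.v (ι a) = val.v a) : val.R →+* valL.R where
  toFun a := ⟨ι a.1, show (0 : WithTop ℝ) ≤ valL.v (ι a.1) by rw [h]; exact a.2⟩
  map_one' := Subtype.ext (by simp)
  map_mul' a b := Subtype.ext (by push_cast; simp)
  map_zero' := Subtype.ext (by simp)
  map_add' a b := Subtype.ext (by push_cast; simp)

/-- The induced map of residue fields. -/
def AddVal.residueMap (val : AddVal K) (valL : AddVal L) (ι : K →+* L)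
    (h : ∀ a, valL.v (ι a) = val.v a) : val.k →+* valL.k :=
  Ideal.Quotient.lift val.mIdeal
    ((Ideal.Quotient.mk valL.mIdeal).comp (val.restrictHom valL ι h))
    (fun a ha => by
      have hm : (val.restrictHom valL ι h) a ∈ valL.mIdeal := by
        show (0 : WithTop ℝ) < valL.v (ι a.1)
        rw [h]; exact ha
      exact Ideal.Quotient.eq_zero_iff_mem.mpr hm)

/-- Extension of a coefficient ring homomorphism to Laurent polynomial rings. -/
def coeffMap {A B : Type*} [CommSemiring A] [CommSemiring B] (φ : A →+* B) (N : ℕ) :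
    AddMonoidAlgebra A (Fin N → ℤ) →+* AddMonoidAlgebra B (Fin N → ℤ) :=
  AddMonoidAlgebra.liftNCRingHom (AddMonoidAlgebra.singleZeroRingHom.comp φ)
    (AddMonoidAlgebra.of B (Fin N → ℤ)) (fun _ _ => Commute.all _ _)

section BCAux

variable {K L : Type*} [Field K] [Field L]

theorem AddVal.v_zero (val : AddVal K) : val.v 0 = ⊤ := (val.v_eq_top_iff 0).2 rfl

theorem AddVal.v_ne_top (val : AddVal K) {a : K} (h : a ≠ 0) : val.v a ≠ ⊤ :=
  fun ht => h ((val.v_eq_top_iff a).1 ht)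

theorem AddVal.v_add_eq_left (val : AddVal K) {a b : K} (h : val.v a < val.v b) :
    val.v (a + b) = val.v a := by
  refine le_antisymm ?_ (le_trans (le_min le_rfl h.le) (val.v_add a b))
  by_contra hlt
  push_neg at hlt
  have he : (a + b) + (-b) = a := by ring
  have h2 := val.v_add (a + b) (-b)
  rw [he, val.v_neg] at h2
  have : val.v a < min (val.v (a + b)) (val.v b) := lt_min hlt h
  exact absurd (lt_of_lt_of_le this h2) (lt_irrefl _)

theorem AddVal.res_of_nonneg (val : AddVal K) {a : K} (ha : 0 ≤ val.v a) :
    val.res a = Ideal.Quotient.mk val.mIdeal ⟨a, ha⟩ := dif_pos ha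

theorem AddVal.res_add (val : AddVal K) {a b : K} (ha : 0 ≤ val.v a) (hb : 0 ≤ val.v b) :
    val.res (a + b) = val.res a + val.res b := by
  have hab : 0 ≤ val.v (a + b) := le_trans (le_min ha hb) (val.v_add a b)
  rw [val.res_of_nonneg ha, val.res_of_nonneg hb, val.res_of_nonneg hab]
  exact (Ideal.Quotient.mk val.mIdeal).map_add ⟨a, ha⟩ ⟨b, hb⟩

theorem AddVal.res_mul (val : AddVal K) {a b : K} (ha : 0 ≤ val.v a) (hb : 0 ≤ val.v b) :
    val.res (a * b) = val.res a * val.res b := by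
  have hab : 0 ≤ val.v (a * b) := by rw [val.v_mul]; exact add_nonneg ha hb
  rw [val.res_of_nonneg ha, val.res_of_nonneg hb, val.res_of_nonneg hab]
  exact (Ideal.Quotient.mk val.mIdeal).map_mul ⟨a, ha⟩ ⟨b, hb⟩

theorem AddVal.res_eq_zero (val : AddVal K) {a : K} (ha : 0 < val.v a) :
    val.res a = 0 := by
  rw [val.res_of_nonneg ha.le]
  exact Ideal.Quotient.eq_zero_iff_mem.mpr ha

/-- membership in the value group -/
def AddVal.VG (val : AddVal K) (γ : ℝ) : Prop := ∃ a : K, a ≠ 0 ∧ val.v a = (γ : WithTop ℝ)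

theorem AddVal.VG_zero (val : AddVal K) : val.VG 0 := ⟨1, one_ne_zero, by rw [val.v_one]; norm_num⟩

theorem AddVal.VG_add (val : AddVal K) {γ δ : ℝ} (hγ : val.VG γ) (hδ : val.VG δ) :
    val.VG (γ + δ) := by
  obtain ⟨a, ha, hva⟩ := hγ
  obtain ⟨b, hb, hvb⟩ := hδ
  exact ⟨a * b, mul_ne_zero ha hb, by rw [val.v_mul, hva, hvb, ← WithTop.coe_add]⟩

theorem AddVal.VG_neg (val : AddVal K) {γ : ℝ} (hγ : val.VG γ) : val.VG (-γ) := by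
  obtain ⟨a, ha, hva⟩ := hγ
  refine ⟨a⁻¹, inv_ne_zero ha, ?_⟩
  have h1 : val.v (a * a⁻¹) = 0 := by rw [mul_inv_cancel₀ ha, val.v_one]
  rw [val.v_mul, hva] at h1
  have hne : ((γ : ℝ) : WithTop ℝ) ≠ ⊤ := WithTop.coe_ne_top
  have : (γ : WithTop ℝ) + val.v a⁻¹ = (γ : WithTop ℝ) + ((-γ : ℝ) : WithTop ℝ) := by
    rw [h1, ← WithTop.coe_add]
    norm_num
  exact WithTop.add_left_cancel hne this

theorem AddVal.v_inv (val : AddVal K) {a : K} {γ : ℝ} (ha : a ≠ 0)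
    (hva : val.v a = (γ : WithTop ℝ)) : val.v a⁻¹ = ((-γ : ℝ) : WithTop ℝ) := by
  have h1 : val.v (a * a⁻¹) = 0 := by rw [mul_inv_cancel₀ ha, val.v_one]
  rw [val.v_mul, hva] at h1
  have : (γ : WithTop ℝ) + val.v a⁻¹ = (γ : WithTop ℝ) + ((-γ : ℝ) : WithTop ℝ) := by
    rw [h1, ← WithTop.coe_add]
    norm_num
  exact WithTop.add_left_cancel WithTop.coe_ne_top this

theorem AddVal.VG_zsmul (val : AddVal K) {γ : ℝ} (hγ : val.VG γ) (n : ℤ) :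
    val.VG (γ * n) := by
  induction n using Int.induction_on with
  | zero => simpa using val.VG_zero
  | succ k ih => push_cast; rw [mul_add, mul_one]; exact val.VG_add (by push_cast at ih ⊢; exact ih) hγ
  | pred k ih => push_cast; rw [mul_sub, mul_one, sub_eq_add_neg]; exact val.VG_add (by push_cast at ih ⊢; exact ih) (val.VG_neg hγ)

theorem AddVal.VG_dotw {N : ℕ} (val : AddVal K) {w : Fin N → ℝ}
    (hw : ∀ i, val.VG (w i)) (u : Fin N → ℤ) : val.VG (dotw w u) := by
  unfold dotw
  refine Finset.sum_induction _ val.VG (fun a b => val.VG_add) val.VG_zero ?_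
  intro i _
  exact val.VG_zsmul (hw i) (u i)

end BCAux
section BCAux2

variable {K L : Type*} [Field K] [Field L]

theorem coeffMap_single {A B : Type*} [CommSemiring A] [CommSemiring B] (φ : A →+* B) (N : ℕ)
    (u : Fin N → ℤ) (a : A) :
    coeffMap φ N (AddMonoidAlgebra.single u a) = AddMonoidAlgebra.single u (φ a) := by
  simp [coeffMap, AddMonoidAlgebra.liftNCRingHom_single,
    AddMonoidAlgebra.singleZeroRingHom_apply, AddMonoidAlgebra.of_apply,
    AddMonoidAlgebra.single_mul_single]

theorem coeffMap_apply {A B : Type*} [CommSemiring A] [CommSemiring B] (φ : A →+* B) (N : ℕ)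
    (f : AddMonoidAlgebra A (Fin N → ℤ)) (u : Fin N → ℤ) :
    (coeffMap φ N f).coeff u = φ (f.coeff u) := by
  induction f using AddMonoidAlgebra.induction_linear with
  | zero => simp
  | add f g hf hg =>
      rw [map_add]
      show (coeffMap φ N f + coeffMap φ N g).coeff u = _
      rw [AddMonoidAlgebra.coeff_add, Finsupp.add_apply, hf, hg, AddMonoidAlgebra.coeff_add, Finsupp.add_apply, map_add]
  | single a b =>
      rw [coeffMap_single]
      rw [AddMonoidAlgebra.coeff_single, AddMonoidAlgebra.coeff_single, Finsupp.single_apply, Finsupp.single_apply]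
      split_ifs <;> simp

theorem coeffMap_smul (ι : K →+* L) (N : ℕ) (a : K) (f : AddMonoidAlgebra K (Fin N → ℤ)) :
    coeffMap ι N (a • f) = ι a • coeffMap ι N f := by
  ext u
  rw [coeffMap_apply, AddMonoidAlgebra.coeff_smul, Finsupp.smul_apply, AddMonoidAlgebra.coeff_smul, Finsupp.smul_apply, smul_eq_mul, smul_eq_mul,
    map_mul, coeffMap_apply]

theorem initForm_apply (val : AddVal K) (r : ℝ → K) {N : ℕ} (w : Fin N → ℝ)
    (f : AddMonoidAlgebra K (Fin N → ℤ)) (u : Fin N → ℤ) :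
    (initForm val r w f).coeff u =
      if val.v (f.coeff u) + ((dotw w u : ℝ) : WithTop ℝ) = 0 then val.res (f.coeff u * r (dotw w u))
      else 0 := by
  rw [initForm, AddMonoidAlgebra.coeff_finsuppSum, Finsupp.sum_apply]
  rw [Finsupp.sum]
  have : ∀ x ∈ f.coeff.support,
      (AddMonoidAlgebra.single x (if val.v (f.coeff x) + ((dotw w x : ℝ) : WithTop ℝ) = 0
        then val.res (f.coeff x * r (dotw w x)) else 0) : AddMonoidAlgebra val.k (Fin N → ℤ)).coeff u
      = if x = u then (if val.v (f.coeff x) + ((dotw w x : ℝ) : WithTop ℝ) = 0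
        then val.res (f.coeff x * r (dotw w x)) else 0) else 0 := by
    intro x _
    rw [AddMonoidAlgebra.coeff_single]; exact Finsupp.single_apply
  rw [Finset.sum_congr rfl this, Finset.sum_ite_eq' f.coeff.support u]
  split_ifs with h1 h2 h2
  · rfl
  · rfl
  · -- u ∉ support but condition holds: f u = 0, v = ⊤, contradiction
    exfalso
    rw [Finsupp.notMem_support_iff.mp h1, val.v_zero, top_add] at h2
    exact (by simp : (⊤ : WithTop ℝ) ≠ 0) h2
  · rfl

/-- the tilted-algebra condition -/
def TiltA (val : AddVal K) {N : ℕ} (w : Fin N → ℝ) (f : AddMonoidAlgebra K (Fin N → ℤ)) : Prop :=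
  ∀ u, (0 : WithTop ℝ) ≤ val.v (f.coeff u) + ((dotw w u : ℝ) : WithTop ℝ)

theorem tilt_iff (val : AddVal K) {N : ℕ} (w : Fin N → ℝ) (f : AddMonoidAlgebra K (Fin N → ℤ)) :
    (∀ u ∈ f.coeff.support, (0 : WithTop ℝ) ≤ val.v (f.coeff u) + ((dotw w u : ℝ) : WithTop ℝ)) ↔
      TiltA val w f := by
  constructor
  · intro h u
    by_cases hu : u ∈ f.coeff.support
    · exact h u hu
    · rw [Finsupp.notMem_support_iff.mp hu, val.v_zero, top_add]
      exact le_top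
  · intro h u _
    exact h u

end BCAux2
section BCAux3

variable {K L : Type*} [Field K] [Field L]

theorem wt_eq_zero_of_add {x y : WithTop ℝ} (hx : 0 ≤ x) (hy : 0 ≤ y) (hxy : x + y = 0) :
    x = 0 ∧ y = 0 := by
  constructor
  · exact le_antisymm (hxy ▸ le_add_of_nonneg_right hy) hx
  · exact le_antisymm (hxy ▸ le_add_of_nonneg_left hx) hy

theorem wt_min_le {X Y Z c : WithTop ℝ} (hmin : min X Y ≤ Z) (hX : 0 ≤ X + c)
    (hY : 0 ≤ Y + c) : 0 ≤ Z + c := by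
  rcases le_total X Y with h | h
  · rw [min_eq_left h] at hmin
    exact le_trans hX (add_le_add_left hmin c)
  · rw [min_eq_right h] at hmin
    exact le_trans hY (add_le_add_left hmin c)

theorem wt_min_lt {X Y Z c : WithTop ℝ} (hmin : min X Y ≤ Z) (hX : 0 < X + c)
    (hY : 0 < Y + c) : 0 < Z + c := by
  rcases le_total X Y with h | h
  · rw [min_eq_left h] at hmin
    exact lt_of_lt_of_le hX (add_le_add_left hmin c)
  · rw [min_eq_right h] at hmin
    exact lt_of_lt_of_le hY (add_le_add_left hmin c)

theorem inco_add (val : AddVal K) {rr a b : K} {c : ℝ} (hc : val.v rr = (c : WithTop ℝ))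
    (ha : 0 ≤ val.v a + (c : WithTop ℝ)) (hb : 0 ≤ val.v b + (c : WithTop ℝ)) :
    (if val.v (a + b) + (c : WithTop ℝ) = 0 then val.res ((a + b) * rr) else 0) =
      (if val.v a + (c : WithTop ℝ) = 0 then val.res (a * rr) else 0) +
      (if val.v b + (c : WithTop ℝ) = 0 then val.res (b * rr) else 0) := by
  have hva : val.v (a * rr) = val.v a + (c : WithTop ℝ) := by rw [val.v_mul, hc]
  have hvb : val.v (b * rr) = val.v b + (c : WithTop ℝ) := by rw [val.v_mul, hc]
  have hvab : val.v ((a + b) * rr) = val.v (a + b) + (c : WithTop ℝ) := by rw [val.v_mul, hc]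
  have hab : 0 ≤ val.v (a + b) + (c : WithTop ℝ) := wt_min_le (val.v_add a b) ha hb
  have e1 : val.v a + (c : WithTop ℝ) = 0 → 0 ≤ val.v (a * rr) := by
    intro h; rw [hva]; exact le_of_eq h.symm
  have e2 : val.v b + (c : WithTop ℝ) = 0 → 0 ≤ val.v (b * rr) := by
    intro h; rw [hvb]; exact le_of_eq h.symm
  by_cases hA : val.v a + (c : WithTop ℝ) = 0 <;> by_cases hB : val.v b + (c : WithTop ℝ) = 0
  · rw [if_pos hA, if_pos hB]
    have hres : val.res ((a + b) * rr) = val.res (a * rr) + val.res (b * rr) := by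
      rw [add_mul]; exact val.res_add (e1 hA) (e2 hB)
    by_cases hAB : val.v (a + b) + (c : WithTop ℝ) = 0
    · rw [if_pos hAB]; exact hres
    · rw [if_neg hAB, ← hres]
      refine (val.res_eq_zero ?_).symm
      rw [hvab]
      exact lt_of_le_of_ne hab (Ne.symm hAB)
  · have hBpos : 0 < val.v b + (c : WithTop ℝ) := lt_of_le_of_ne hb (Ne.symm hB)
    have hlt : val.v a < val.v b := by
      have h3 : val.v a + (c : WithTop ℝ) < val.v b + (c : WithTop ℝ) := hA ▸ hBpos
      exact lt_of_add_lt_add_right h3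
    have h2 : val.v (a + b) + (c : WithTop ℝ) = 0 := by rw [val.v_add_eq_left hlt]; exact hA
    rw [if_pos h2, if_pos hA, if_neg hB, add_zero, add_mul,
      val.res_add (e1 hA) (by rw [hvb]; exact hBpos.le),
      val.res_eq_zero (a := b * rr) (by rw [hvb]; exact hBpos), add_zero]
  · have hApos : 0 < val.v a + (c : WithTop ℝ) := lt_of_le_of_ne ha (Ne.symm hA)
    have hlt : val.v b < val.v a := by
      have h3 : val.v b + (c : WithTop ℝ) < val.v a + (c : WithTop ℝ) := hB ▸ hApos
      exact lt_of_add_lt_add_right h3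
    have h2 : val.v (a + b) + (c : WithTop ℝ) = 0 := by
      rw [show a + b = b + a from add_comm a b, val.v_add_eq_left hlt]; exact hB
    rw [if_pos h2, if_neg hA, if_pos hB, zero_add, add_mul,
      val.res_add (by rw [hva]; exact hApos.le) (e2 hB),
      val.res_eq_zero (a := a * rr) (by rw [hva]; exact hApos), zero_add]
  · have hApos : 0 < val.v a + (c : WithTop ℝ) := lt_of_le_of_ne ha (Ne.symm hA)
    have hBpos : 0 < val.v b + (c : WithTop ℝ) := lt_of_le_of_ne hb (Ne.symm hB)
    rw [if_neg (ne_of_gt (wt_min_lt (val.v_add a b) hApos hBpos)), if_neg hA, if_neg hB,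
      add_zero]

theorem inco_smul (valL : AddVal L) {rr d a : L} {c : ℝ} (hc : valL.v rr = (c : WithTop ℝ))
    (hd : 0 ≤ valL.v d) (ha : 0 ≤ valL.v a + (c : WithTop ℝ)) :
    (if valL.v (d * a) + (c : WithTop ℝ) = 0 then valL.res (d * a * rr) else 0) =
      valL.res d * (if valL.v a + (c : WithTop ℝ) = 0 then valL.res (a * rr) else 0) := by
  have hda : valL.v (d * a) + (c : WithTop ℝ) = valL.v d + (valL.v a + (c : WithTop ℝ)) := by
    rw [valL.v_mul, add_assoc]
  by_cases hA : valL.v a + (c : WithTop ℝ) = 0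
  · rw [if_pos hA]
    by_cases hD : valL.v d = 0
    · rw [if_pos (by rw [hda, hA, hD, add_zero]), mul_assoc]
      exact valL.res_mul hd (by rw [valL.v_mul, hc]; exact le_of_eq hA.symm)
    · have hDpos : 0 < valL.v d := lt_of_le_of_ne hd (Ne.symm hD)
      rw [if_neg (by rw [hda, hA, add_zero]; exact hD), valL.res_eq_zero hDpos, zero_mul]
  · rw [if_neg hA, mul_zero, if_neg ?_]
    intro h
    rw [hda] at h
    exact hA (wt_eq_zero_of_add hd ha h).2

theorem initForm_zero (val : AddVal K) (r : ℝ → K) {N : ℕ} (w : Fin N → ℝ) :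
    initForm val r w 0 = 0 := by
  rw [initForm, AddMonoidAlgebra.coeff_zero]
  exact Finsupp.sum_zero_index

theorem initForm_add (val : AddVal K) (r : ℝ → K) {N : ℕ} {w : Fin N → ℝ}
    (hwr : ∀ u : Fin N → ℤ, val.v (r (dotw w u)) = ((dotw w u : ℝ) : WithTop ℝ))
    {f g : AddMonoidAlgebra K (Fin N → ℤ)} (hf : TiltA val w f) (hg : TiltA val w g) :
    initForm val r w (f + g) = initForm val r w f + initForm val r w g := by
  ext u
  rw [AddMonoidAlgebra.coeff_add, Finsupp.add_apply, initForm_apply, initForm_apply, initForm_apply, AddMonoidAlgebra.coeff_add, Finsupp.add_apply]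
  exact inco_add val (hwr u) (hf u) (hg u)

theorem initForm_smul (valL : AddVal L) (rL : ℝ → L) {N : ℕ} {w : Fin N → ℝ}
    (hwr : ∀ u : Fin N → ℤ, valL.v (rL (dotw w u)) = ((dotw w u : ℝ) : WithTop ℝ))
    {d : L} {f : AddMonoidAlgebra L (Fin N → ℤ)} (hd : 0 ≤ valL.v d) (hf : TiltA valL w f) :
    initForm valL rL w (d • f) = valL.res d • initForm valL rL w f := by
  ext u
  rw [AddMonoidAlgebra.coeff_smul, Finsupp.smul_apply, initForm_apply, initForm_apply, AddMonoidAlgebra.coeff_smul, Finsupp.smul_apply, smul_eq_mul,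
    smul_eq_mul]
  exact inco_smul valL (hwr u) hd (hf u)

theorem residueMap_res (val : AddVal K) (valL : AddVal L) (ι : K →+* L)
    (hι : ∀ a, valL.v (ι a) = val.v a) {a : K} (ha : 0 ≤ val.v a) :
    val.residueMap valL ι hι (val.res a) = valL.res (ι a) := by
  rw [val.res_of_nonneg ha, valL.res_of_nonneg (show 0 ≤ valL.v (ι a) by rw [hι]; exact ha)]
  rfl

theorem initForm_basechange (val : AddVal K) (valL : AddVal L) (ι : K →+* L)
    (hι : ∀ a, valL.v (ι a) = val.v a) (r : ℝ → K) (rL : ℝ → L) {N : ℕ} {w : Fin N → ℝ}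
    (hwr : ∀ u : Fin N → ℤ, val.v (r (dotw w u)) = ((dotw w u : ℝ) : WithTop ℝ))
    (hcw : ∀ u : Fin N → ℤ, ι (r (dotw w u)) = rL (dotw w u))
    (f : AddMonoidAlgebra K (Fin N → ℤ)) :
    initForm valL rL w (coeffMap ι N f) =
      coeffMap (val.residueMap valL ι hι) N (initForm val r w f) := by
  ext u
  rw [initForm_apply, coeffMap_apply, coeffMap_apply, initForm_apply, hι]
  by_cases hA : val.v (f.coeff u) + ((dotw w u : ℝ) : WithTop ℝ) = 0
  · rw [if_pos hA, if_pos hA, ← hcw u, ← map_mul,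
      residueMap_res val valL ι hι (by rw [val.v_mul, hwr u]; exact le_of_eq hA.symm)]
  · rw [if_neg hA, if_neg hA, map_zero]

theorem smul_mem_ideal {R : Type*} [CommRing R] {N : ℕ}
    (J : Ideal (AddMonoidAlgebra R (Fin N → ℤ))) (d : R) {x : AddMonoidAlgebra R (Fin N → ℤ)}
    (hx : x ∈ J) : d • x ∈ J := by
  have hh : d • x = AddMonoidAlgebra.single 0 d * x := by
    ext u
    rw [AddMonoidAlgebra.coeff_smul, Finsupp.smul_apply, smul_eq_mul, AddMonoidAlgebra.coeff_single_zero_mul]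
  rw [hh]
  exact J.mul_mem_left _ hx

theorem tiltA_sub (val : AddVal K) {N : ℕ} {w : Fin N → ℝ}
    {f g : AddMonoidAlgebra K (Fin N → ℤ)} (hf : TiltA val w f) (hg : TiltA val w g) :
    TiltA val w (f - g) := by
  intro u
  have h1 : (f - g).coeff u = f.coeff u + (- g.coeff u) := by rw [AddMonoidAlgebra.coeff_sub, Finsupp.sub_apply]; ring
  rw [h1]
  have h2 := val.v_add (f.coeff u) (- g.coeff u)
  rw [val.v_neg] at h2
  exact wt_min_le h2 (hf u) (hg u)

theorem tiltA_smul (valL : AddVal L) {N : ℕ} {w : Fin N → ℝ} {d : L}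
    {f : AddMonoidAlgebra L (Fin N → ℤ)} (hd : 0 ≤ valL.v d) (hf : TiltA valL w f) :
    TiltA valL w (d • f) := by
  intro u
  rw [AddMonoidAlgebra.coeff_smul, Finsupp.smul_apply, smul_eq_mul, valL.v_mul, add_assoc]
  exact add_nonneg hd (hf u)

theorem tiltA_add (val : AddVal K) {N : ℕ} {w : Fin N → ℝ}
    {f g : AddMonoidAlgebra K (Fin N → ℤ)} (hf : TiltA val w f) (hg : TiltA val w g) :
    TiltA val w (f + g) := by
  intro u
  rw [AddMonoidAlgebra.coeff_add, Finsupp.add_apply]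
  exact wt_min_le (val.v_add (f.coeff u) (g.coeff u)) (hf u) (hg u)

end BCAux3
section BCAux4

variable {K L : Type*} [Field K] [Field L]

theorem map_rep {N : ℕ} (ι : K →+* L) (I : Ideal (AddMonoidAlgebra K (Fin N → ℤ)))
    {f : AddMonoidAlgebra L (Fin N → ℤ)} (hf : f ∈ I.map (coeffMap ι N)) :
    ∃ (s : ℕ) (G : Fin s → AddMonoidAlgebra K (Fin N → ℤ)) (c : Fin s → L),
      (∀ i, G i ∈ I) ∧ f = ∑ i, c i • coeffMap ι N (G i) := by
  classical
  set S : Submodule L (AddMonoidAlgebra L (Fin N → ℤ)) :=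
    Submodule.span L (coeffMap ι N '' I) with hS
  have hmulS : ∀ (p x : AddMonoidAlgebra L (Fin N → ℤ)), x ∈ S → p * x ∈ S := by
    intro p x hx
    induction hx using Submodule.span_induction with
    | mem y hy =>
        obtain ⟨g0, hg0, rfl⟩ := hy
        induction p using AddMonoidAlgebra.induction_linear with
        | zero => rw [zero_mul]; exact S.zero_mem
        | add p q hp hq => rw [add_mul]; exact S.add_mem hp hq
        | single u b =>
            have h1 : (AddMonoidAlgebra.single u b : AddMonoidAlgebra L (Fin N → ℤ)) =
                b • coeffMap ι N (AddMonoidAlgebra.single u 1) := by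
              rw [coeffMap_single, map_one, AddMonoidAlgebra.smul_single, smul_eq_mul, mul_one]
            rw [h1, smul_mul_assoc, ← map_mul]
            exact S.smul_mem b (Submodule.subset_span ⟨_, I.mul_mem_left _ hg0, rfl⟩)
    | zero => rw [mul_zero]; exact S.zero_mem
    | add x y hx hy hpx hpy => rw [mul_add]; exact S.add_mem hpx hpy
    | smul a y hy hpy => rw [mul_smul_comm]; exact S.smul_mem a hpy
  have hfS : f ∈ S := by
    have hle : I.map (coeffMap ι N) ≤
        ({ carrier := S
           add_mem' := fun h1 h2 => S.add_mem h1 h2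
           zero_mem' := S.zero_mem
           smul_mem' := fun p {x} hx => hmulS p x hx } : Ideal (AddMonoidAlgebra L (Fin N → ℤ))) := by
      rw [Ideal.map_le_iff_le_comap]
      intro g hg
      exact Submodule.subset_span ⟨g, hg, rfl⟩
    exact hle hf
  obtain ⟨n, cf, gf, hsum⟩ := Submodule.mem_span_set'.mp hfS
  choose G hGI hGe using fun i => (gf i).2
  refine ⟨n, G, cf, hGI, ?_⟩
  rw [← hsum]
  exact (Finset.sum_congr rfl (fun i _ => by rw [hGe i])).symm

end BCAux4
section BCAux5

variable {K L : Type*} [Field K] [Field L]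

theorem main_ind {N : ℕ} (val : AddVal K) (valL : AddVal L) (ι : K →+* L)
    (hι : ∀ a, valL.v (ι a) = val.v a) (r : ℝ → K) (rL : ℝ → L) {w : Fin N → ℝ}
    (hwv : ∀ i, val.VG (w i))
    (hr : ∀ γ : ℝ, val.VG γ → val.v (r γ) = (γ : WithTop ℝ))
    (hwr : ∀ u : Fin N → ℤ, val.v (r (dotw w u)) = ((dotw w u : ℝ) : WithTop ℝ))
    (hwrL : ∀ u : Fin N → ℤ, valL.v (rL (dotw w u)) = ((dotw w u : ℝ) : WithTop ℝ))
    (hcw : ∀ u : Fin N → ℤ, ι (r (dotw w u)) = rL (dotw w u))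
    (I : Ideal (AddMonoidAlgebra K (Fin N → ℤ))) :
    ∀ (s : ℕ) (G : Fin s → AddMonoidAlgebra K (Fin N → ℤ)) (c : Fin s → L),
      (∀ i, G i ∈ I) → TiltA valL w (∑ i, c i • coeffMap ι N (G i)) →
      initForm valL rL w (∑ i, c i • coeffMap ι N (G i)) ∈
        (initIdeal val r w I).map (coeffMap (val.residueMap valL ι hι) N) := by
  intro s
  induction s with
  | zero =>
      intro G c _ _
      rw [Fin.sum_univ_zero, initForm_zero]
      exact Submodule.zero_mem _
  | succ s ih =>
      intro G c hG hT
      by_cases hall : ∀ i, G i = 0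
      · have hz : (∑ i, c i • coeffMap ι N (G i)) = 0 :=
          Finset.sum_eq_zero fun i _ => by rw [hall i, map_zero, smul_zero]
        rw [hz, initForm_zero]
        exact Submodule.zero_mem _
      · push_neg at hall
        obtain ⟨i0, hne⟩ := hall
        have hsupp : (G i0).coeff.support.Nonempty := Finsupp.support_nonempty_iff.mpr (mt AddMonoidAlgebra.coeff_eq_zero.mp hne)
        obtain ⟨u1, hu1, hminEq⟩ := Finset.exists_mem_eq_inf (G i0).coeff.support hsupp
          (fun u => val.v ((G i0).coeff u) + ((dotw w u : ℝ) : WithTop ℝ))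
        have hg0u1 : (G i0).coeff u1 ≠ 0 := Finsupp.mem_support_iff.mp hu1
        obtain ⟨x, hx⟩ : ∃ x : ℝ, val.v ((G i0).coeff u1) = (x : WithTop ℝ) := by
          cases hh : val.v ((G i0).coeff u1) with
          | top => exact absurd hh (val.v_ne_top hg0u1)
          | coe x => exact ⟨x, rfl⟩
        set W : ℝ := x + dotw w u1 with hWdef
        have hVGW : val.VG W := val.VG_add ⟨(G i0).coeff u1, hg0u1, hx⟩ (val.VG_dotw hwv u1)
        have hrW : val.v (r W) = (W : WithTop ℝ) := hr W hVGW
        have hrWne : r W ≠ 0 := by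
          intro h
          rw [h, val.v_zero] at hrW
          exact WithTop.coe_ne_top hrW.symm
        set g1 : AddMonoidAlgebra K (Fin N → ℤ) := (r W)⁻¹ • G i0 with hg1
        have hg1I : g1 ∈ I := Submodule.smul_of_tower_mem I _ (hG i0)
        have hvinv : val.v (r W)⁻¹ = ((-W : ℝ) : WithTop ℝ) := val.v_inv hrWne hrW
        have hg1app : ∀ u, val.v (g1.coeff u) = ((-W : ℝ) : WithTop ℝ) + val.v ((G i0).coeff u) := by
          intro u
          rw [hg1, AddMonoidAlgebra.coeff_smul, Finsupp.smul_apply, smul_eq_mul, val.v_mul, hvinv]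
        have hinfW : (G i0).coeff.support.inf
            (fun u => val.v ((G i0).coeff u) + ((dotw w u : ℝ) : WithTop ℝ)) = (W : WithTop ℝ) := by
          rw [hminEq, hx, ← WithTop.coe_add]
        have hlow : ∀ u, (W : WithTop ℝ) ≤ val.v ((G i0).coeff u) + ((dotw w u : ℝ) : WithTop ℝ) := by
          intro u
          by_cases hu : u ∈ (G i0).coeff.support
          · rw [← hinfW]
            exact Finset.inf_le hu
          · rw [Finsupp.notMem_support_iff.mp hu, val.v_zero, top_add]
            exact le_top
        have hTg1 : TiltA val w g1 := by
          intro u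
          have h0 : (0 : WithTop ℝ) = ((-W : ℝ) : WithTop ℝ) + (W : WithTop ℝ) := by
            rw [← WithTop.coe_add]
            norm_num
          rw [hg1app u, add_assoc, h0]
          exact add_le_add_right (hlow u) _
        have hpiv : val.v (g1.coeff u1) + ((dotw w u1 : ℝ) : WithTop ℝ) = 0 := by
          rw [hg1app u1, hx, ← WithTop.coe_add, ← WithTop.coe_add, ← WithTop.coe_zero]
          norm_num [hWdef]
        have hg1u1ne : g1.coeff u1 ≠ 0 := by
          rw [hg1, AddMonoidAlgebra.coeff_smul, Finsupp.smul_apply, smul_eq_mul]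
          exact mul_ne_zero (inv_ne_zero hrWne) hg0u1
        set e : Fin s → K := fun j => (G (i0.succAbove j)).coeff u1 / g1.coeff u1 with he
        set G' : Fin s → AddMonoidAlgebra K (Fin N → ℤ) :=
          fun j => G (i0.succAbove j) - e j • g1 with hG'
        have hG'I : ∀ j, G' j ∈ I :=
          fun j => sub_mem (hG _) (Submodule.smul_of_tower_mem I _ hg1I)
        set c' : Fin s → L := fun j => c (i0.succAbove j) with hc'
        set d : L := c i0 * ι (r W) + ∑ j, c' j * ι (e j) with hd
        have hrep : (∑ i, c i • coeffMap ι N (G i)) =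
            d • coeffMap ι N g1 + ∑ j, c' j • coeffMap ι N (G' j) := by
          rw [Fin.sum_univ_succAbove (fun i => c i • coeffMap ι N (G i)) i0]
          have hGi0 : G i0 = r W • g1 := by
            rw [hg1, smul_smul, mul_inv_cancel₀ hrWne, one_smul]
          rw [hGi0]
          simp only [hG', map_sub, coeffMap_smul, smul_sub, smul_smul, hd, add_smul,
            Finset.sum_smul, Finset.sum_sub_distrib]
          abel
        have hT2 : TiltA valL w (d • coeffMap ι N g1 + ∑ j, c' j • coeffMap ι N (G' j)) := by
          rw [← hrep]; exact hT
        have hTφg1 : TiltA valL w (coeffMap ι N g1) := by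
          intro u
          rw [coeffMap_apply, hι]
          exact hTg1 u
        have hG'u1 : ∀ j, (G' j).coeff u1 = 0 := by
          intro j
          rw [hG']
          show (G (i0.succAbove j)).coeff u1 - (e j • g1).coeff u1 = 0
          rw [AddMonoidAlgebra.coeff_smul, Finsupp.smul_apply, smul_eq_mul, he]
          show (G (i0.succAbove j)).coeff u1 - (G (i0.succAbove j)).coeff u1 / g1.coeff u1 * g1.coeff u1 = 0
          rw [div_mul_cancel₀ _ hg1u1ne, sub_self]
        have hfu1 : (d • coeffMap ι N g1 + ∑ j, c' j • coeffMap ι N (G' j)).coeff u1 =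
            d * ι (g1.coeff u1) := by
          rw [AddMonoidAlgebra.coeff_add, Finsupp.add_apply, AddMonoidAlgebra.coeff_smul, Finsupp.smul_apply, smul_eq_mul, coeffMap_apply]
          have hz : (∑ j, c' j • coeffMap ι N (G' j)).coeff u1 = 0 := by
            rw [AddMonoidAlgebra.coeff_sum, Finsupp.finset_sum_apply]
            refine Finset.sum_eq_zero fun j _ => ?_
            rw [AddMonoidAlgebra.coeff_smul, Finsupp.smul_apply, coeffMap_apply, hG'u1 j, map_zero, smul_zero]
          rw [hz, add_zero]
        have hdnn : 0 ≤ valL.v d := by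
          have h1 := hT2 u1
          rw [hfu1, valL.v_mul, hι, add_assoc, hpiv, add_zero] at h1
          exact h1
        have hTdg1 : TiltA valL w (d • coeffMap ι N g1) := tiltA_smul valL hdnn hTφg1
        have hTsum : TiltA valL w (∑ j, c' j • coeffMap ι N (G' j)) := by
          have h3 := tiltA_sub valL hT2 hTdg1
          rwa [add_sub_cancel_left] at h3
        have hIH := ih G' c' hG'I hTsum
        rw [hrep, initForm_add valL rL hwrL hTdg1 hTsum,
          initForm_smul valL rL hwrL hdnn hTφg1,
          initForm_basechange val valL ι hι r rL hwr hcw g1]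
        refine Submodule.add_mem _ ?_ hIH
        refine smul_mem_ideal _ _ ?_
        refine Ideal.mem_map_of_mem _ ?_
        refine Ideal.subset_span ?_
        exact ⟨g1, hg1I, (tilt_iff val w g1).mpr hTg1, rfl⟩

end BCAux5
theorem stmt16' (N : ℕ) {K L : Type*} [Field K] [Field L] (val : AddVal K) (valL : AddVal L) (ι : K →+* L)
    (hι : ∀ a, valL.v (ι a) = val.v a)
    (r : ℝ → K) (rL : ℝ → L)
    (hr : ∀ γ : ℝ, (∃ a : K, a ≠ 0 ∧ val.v a = (γ : WithTop ℝ)) →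
      val.v (r γ) = (γ : WithTop ℝ))
    (hrL : ∀ γ : ℝ, (∃ x : L, x ≠ 0 ∧ valL.v x = (γ : WithTop ℝ)) →
      valL.v (rL γ) = (γ : WithTop ℝ))
    (hcompat : ∀ γ : ℝ, (∃ a : K, a ≠ 0 ∧ val.v a = (γ : WithTop ℝ)) → ι (r γ) = rL γ)
    (w : Fin N → ℝ) (hw : ∀ i, ∃ a : K, a ≠ 0 ∧ val.v a = ((w i : ℝ) : WithTop ℝ))
    (I : Ideal (AddMonoidAlgebra K (Fin N → ℤ))) :
    initIdeal valL rL w (I.map (coeffMap ι N)) =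
      (initIdeal val r w I).map (coeffMap (val.residueMap valL ι hι) N) := by
  classical
  have hwv : ∀ i, val.VG (w i) := hw
  have hVGdot : ∀ u, val.VG (dotw w u) := val.VG_dotw hwv
  have hVGdotL : ∀ u : Fin N → ℤ, valL.VG (dotw w u) := by
    intro u
    obtain ⟨a, ha, hva⟩ := hVGdot u
    exact ⟨ι a, fun h0 => ha (ι.injective (by rw [h0, map_zero])), by rw [hι]; exact hva⟩
  have hwr : ∀ u : Fin N → ℤ, val.v (r (dotw w u)) = ((dotw w u : ℝ) : WithTop ℝ) :=
    fun u => hr _ (hVGdot u)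
  have hwrL : ∀ u : Fin N → ℤ, valL.v (rL (dotw w u)) = ((dotw w u : ℝ) : WithTop ℝ) :=
    fun u => hrL _ (hVGdotL u)
  have hcw : ∀ u : Fin N → ℤ, ι (r (dotw w u)) = rL (dotw w u) :=
    fun u => hcompat _ (hVGdot u)
  apply le_antisymm
  · rw [initIdeal]
    apply Ideal.span_le.mpr
    rintro g ⟨f, hfI, hcond, rfl⟩
    obtain ⟨s, G, c, hGI, hfe⟩ := map_rep ι I hfI
    have hTf : TiltA valL w f := (tilt_iff valL w f).mp hcond
    rw [hfe] at hTf ⊢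
    exact main_ind val valL ι hι r rL hwv hr hwr hwrL hcw I s G c hGI hTf
  · rw [Ideal.map_le_iff_le_comap, initIdeal]
    apply Ideal.span_le.mpr
    rintro g ⟨f, hfI, hcond, rfl⟩
    show coeffMap (val.residueMap valL ι hι) N (initForm val r w f) ∈
      initIdeal valL rL w (I.map (coeffMap ι N))
    rw [← initForm_basechange val valL ι hι r rL hwr hcw f]
    apply Ideal.subset_span
    refine ⟨coeffMap ι N f, Ideal.mem_map_of_mem _ hfI, ?_, rfl⟩
    intro u _
    rw [coeffMap_apply, hι]
    exact ((tilt_iff val w f).mp hcond) u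

/-- Initial ideals commute with base change of valued fields: for `w` with
coordinates in the value group of `K` and compatible splittings `r`, `rL` of the
valuations of `K ⊆ L`, the `w`-initial ideal of the extension of `I` to
`L[x^±]` is the extension of `in_w(I)` to the Laurent polynomial ring over the
residue field of `L`. -/
theorem stmt16 (N : ℕ) (val : AddVal K) (valL : AddVal L) (ι : K →+* L)
    (hι : ∀ a, valL.v (ι a) = val.v a)
    (r : ℝ → K) (rL : ℝ → L)
    (hr : ∀ γ : ℝ, (∃ a : K, a ≠ 0 ∧ val.v a = (γ : WithTop ℝ)) →
      val.v (r γ) = (γ : WithTop ℝ))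
    (hrmul : ∀ γ δ : ℝ, (∃ a : K, a ≠ 0 ∧ val.v a = (γ : WithTop ℝ)) →
      (∃ a : K, a ≠ 0 ∧ val.v a = (δ : WithTop ℝ)) → r (γ + δ) = r γ * r δ)
    (hrL : ∀ γ : ℝ, (∃ x : L, x ≠ 0 ∧ valL.v x = (γ : WithTop ℝ)) →
      valL.v (rL γ) = (γ : WithTop ℝ))
    (hrLmul : ∀ γ δ : ℝ, (∃ x : L, x ≠ 0 ∧ valL.v x = (γ : WithTop ℝ)) →
      (∃ x : L, x ≠ 0 ∧ valL.v x = (δ : WithTop ℝ)) → rL (γ + δ) = rL γ * rL δ)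
    (hcompat : ∀ γ : ℝ, (∃ a : K, a ≠ 0 ∧ val.v a = (γ : WithTop ℝ)) → ι (r γ) = rL γ)
    (w : Fin N → ℝ) (hw : ∀ i, ∃ a : K, a ≠ 0 ∧ val.v a = ((w i : ℝ) : WithTop ℝ))
    (I : Ideal (AddMonoidAlgebra K (Fin N → ℤ))) :
    initIdeal valL rL w (I.map (coeffMap ι N)) =
      (initIdeal val r w I).map (coeffMap (val.residueMap valL ι hι) N) :=
  stmt16' N val valL ι hι r rL hr hrL hcompat w hw I

end
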